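/- For every k ∈ ℕ, p ≥ 1, β > 0, σ ∈ (1/2,1) and fields h ∈ ℝ^p, the quenched free energy of the hierarchical Hopfield model is uniformly bounded: f_k(β,h,σ,p) ≤ f_0(β,h,σ,p) + (βp/2)·2^{1−2σ}/(1 − 2^{1−2σ}), where f_0(β,h,σ,p) = log 2 + E_ξ[log cosh(β Σ_{μ=1}^p h_μ ξ^μ)] with E_ξ the uniform average over ξ ∈ {−1,+1}^p. -/

import Mathlib

open Real Filter

noncomputable def spin (b : Bool) : ℝ := if b then 1 else -1

def finLeft {k : ℕ} (i : Fin (2 ^ k)) : Fin (2 ^ (k + 1)) :=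
  ⟨i.1, lt_of_lt_of_le i.2 (Nat.pow_le_pow_right (by norm_num) (Nat.le_succ k))⟩

def finRight {k : ℕ} (i : Fin (2 ^ k)) : Fin (2 ^ (k + 1)) :=
  ⟨i.1 + 2 ^ k, by
    have h2 : 2 ^ (k + 1) = 2 ^ k + 2 ^ k := by rw [pow_succ]; ring
    have := i.2; omega⟩

lemma two_pow_succ' (k : ℕ) : 2 ^ (k + 1) = 2 ^ k + 2 ^ k := by rw [pow_succ]; ring

lemma sum_split {k : ℕ} {M : Type*} [AddCommMonoid M] (g : Fin (2 ^ (k + 1)) → M) :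
    ∑ j, g j = (∑ i : Fin (2 ^ k), g (finLeft i)) + ∑ i : Fin (2 ^ k), g (finRight i) := by
  have h2 := two_pow_succ' k
  calc ∑ j, g j = ∑ j : Fin (2 ^ k + 2 ^ k), g (Fin.cast h2.symm j) :=
        (Fintype.sum_equiv (finCongr h2.symm) _ _ (fun j => rfl)).symm
    _ = (∑ i : Fin (2 ^ k), g (Fin.cast h2.symm (Fin.castAdd _ i))) +
          ∑ i : Fin (2 ^ k), g (Fin.cast h2.symm (Fin.natAdd _ i)) := Fin.sum_univ_add _
    _ = _ := by
        congr 1 <;> refine Finset.sum_congr rfl fun i _ => ?_ <;> congr 1 <;>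
          exact Fin.ext (by simp [finLeft, finRight, Nat.add_comm])

lemma sub_lt_aux {k : ℕ} (j : Fin (2 ^ (k + 1))) (h : ¬ j.1 < 2 ^ k) : j.1 - 2 ^ k < 2 ^ k := by
  have h2 := two_pow_succ' k; have := j.2; omega

/-- Split a configuration on `2^(k+1)` sites into its two halves. -/
def splitE (k : ℕ) (X : Type*) :
    (Fin (2 ^ (k + 1)) → X) ≃ (Fin (2 ^ k) → X) × (Fin (2 ^ k) → X) where
  toFun S := (fun i => S (finLeft i), fun i => S (finRight i))
  invFun P j := if h : j.1 < 2 ^ k then P.1 ⟨j.1, h⟩ else P.2 ⟨j.1 - 2 ^ k, sub_lt_aux j h⟩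
  left_inv S := by
    funext j
    dsimp only
    by_cases h : j.1 < 2 ^ k
    · rw [dif_pos h]; exact congrArg S (Fin.ext rfl)
    · rw [dif_neg h]
      refine congrArg S (Fin.ext ?_)
      show j.1 - 2 ^ k + 2 ^ k = j.1
      have h2 := two_pow_succ' k; have := j.2; omega
  right_inv P := by
    refine Prod.ext ?_ ?_ <;> funext i
    · show (if h : (finLeft i).1 < 2 ^ k then P.1 ⟨(finLeft i).1, h⟩ else _) = P.1 i
      rw [dif_pos (show (finLeft i).1 < 2 ^ k from i.2)]
      exact congrArg P.1 (Fin.ext rfl)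
    · show (if h : (finRight i).1 < 2 ^ k then _ else P.2 ⟨(finRight i).1 - 2 ^ k, _⟩) = P.2 i
      rw [dif_neg (show ¬ (finRight i).1 < 2 ^ k from (by omega : ¬ (i.1 + 2 ^ k < 2 ^ k)))]
      exact congrArg P.2 (Fin.ext (show i.1 + 2 ^ k - 2 ^ k = i.1 by omega))

lemma splitE_symm_left {k : ℕ} {X : Type*} (P : (Fin (2 ^ k) → X) × (Fin (2 ^ k) → X))
    (i : Fin (2 ^ k)) : (splitE k X).symm P (finLeft i) = P.1 i := by
  show (if h : (finLeft i).1 < 2 ^ k then P.1 ⟨(finLeft i).1, h⟩ else _) = P.1 i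
  rw [dif_pos (show (finLeft i).1 < 2 ^ k from i.2)]
  exact congrArg P.1 (Fin.ext rfl)

lemma splitE_symm_right {k : ℕ} {X : Type*} (P : (Fin (2 ^ k) → X) × (Fin (2 ^ k) → X))
    (i : Fin (2 ^ k)) : (splitE k X).symm P (finRight i) = P.2 i := by
  show (if h : (finRight i).1 < 2 ^ k then _ else P.2 ⟨(finRight i).1 - 2 ^ k, _⟩) = P.2 i
  rw [dif_neg (show ¬ (finRight i).1 < 2 ^ k from (by omega : ¬ (i.1 + 2 ^ k < 2 ^ k)))]
  exact congrArg P.2 (Fin.ext (show i.1 + 2 ^ k - 2 ^ k = i.1 by omega))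

noncomputable def hopH (σ : ℝ) (p : ℕ) :
    (k : ℕ) → (Fin (2 ^ k) → Bool) → (Fin p → Fin (2 ^ k) → Bool) → ℝ
  | 0, _, _ => 0
  | (k + 1), S, ξ =>
      hopH σ p k (fun i => S (finLeft i)) (fun μ i => ξ μ (finLeft i)) +
        hopH σ p k (fun i => S (finRight i)) (fun μ i => ξ μ (finRight i)) -
        1 / (2 * (2 : ℝ) ^ (2 * σ * ((k : ℝ) + 1))) *
          ∑ μ : Fin p, ∑ i : Fin (2 ^ (k + 1)), ∑ j : Fin (2 ^ (k + 1)),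
            spin (ξ μ i) * spin (ξ μ j) * spin (S i) * spin (S j)

noncomputable def hopF (β σ : ℝ) (p : ℕ) (h : Fin p → ℝ) (k : ℕ) : ℝ :=
  ((2 : ℝ) ^ k)⁻¹ * (((2 : ℝ) ^ (p * 2 ^ k))⁻¹ *
    ∑ ξ : Fin p → Fin (2 ^ k) → Bool,
      Real.log (∑ S : Fin (2 ^ k) → Bool,
        Real.exp (-β * hopH σ p k S ξ + β * ∑ μ, h μ * ∑ i, spin (ξ μ i) * spin (S i))))

lemma abs_spin (b : Bool) : |spin b| = 1 := by cases b <;> simp [spin]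

/-- The exponent in the Boltzmann weight. -/
noncomputable def hA (β σ : ℝ) (p : ℕ) (h : Fin p → ℝ) (k : ℕ)
    (S : Fin (2 ^ k) → Bool) (ξ : Fin p → Fin (2 ^ k) → Bool) : ℝ :=
  -β * hopH σ p k S ξ + β * ∑ μ, h μ * ∑ i, spin (ξ μ i) * spin (S i)

/-- The partition function. -/
noncomputable def hZ (β σ : ℝ) (p : ℕ) (h : Fin p → ℝ) (k : ℕ)
    (ξ : Fin p → Fin (2 ^ k) → Bool) : ℝ :=
  ∑ S : Fin (2 ^ k) → Bool, Real.exp (hA β σ p h k S ξ)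

lemma hZ_pos (β σ : ℝ) (p : ℕ) (h : Fin p → ℝ) (k : ℕ) (ξ : Fin p → Fin (2 ^ k) → Bool) :
    0 < hZ β σ p h k ξ :=
  Finset.sum_pos (fun _ _ => Real.exp_pos _) ⟨fun _ => true, Finset.mem_univ _⟩

lemma hopF_eq (β σ : ℝ) (p : ℕ) (h : Fin p → ℝ) (k : ℕ) :
    hopF β σ p h k = ((2 : ℝ) ^ k)⁻¹ * (((2 : ℝ) ^ (p * 2 ^ k))⁻¹ *
      ∑ ξ : Fin p → Fin (2 ^ k) → Bool, Real.log (hZ β σ p h k ξ)) := rfl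

lemma hA_succ (β σ : ℝ) (p : ℕ) (h : Fin p → ℝ) (k : ℕ) (S : Fin (2 ^ (k + 1)) → Bool)
    (ξ : Fin p → Fin (2 ^ (k + 1)) → Bool) :
    hA β σ p h (k + 1) S ξ =
      hA β σ p h k (fun i => S (finLeft i)) (fun μ i => ξ μ (finLeft i)) +
        hA β σ p h k (fun i => S (finRight i)) (fun μ i => ξ μ (finRight i)) +
        β * (1 / (2 * (2 : ℝ) ^ (2 * σ * ((k : ℝ) + 1))) *
          ∑ μ : Fin p, (∑ i : Fin (2 ^ (k + 1)), spin (ξ μ i) * spin (S i)) ^ 2) := by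
  have hT : (∑ μ : Fin p, ∑ i : Fin (2 ^ (k + 1)), ∑ j : Fin (2 ^ (k + 1)),
        spin (ξ μ i) * spin (ξ μ j) * spin (S i) * spin (S j)) =
      ∑ μ : Fin p, (∑ i : Fin (2 ^ (k + 1)), spin (ξ μ i) * spin (S i)) ^ 2 := by
    refine Finset.sum_congr rfl fun μ _ => ?_
    rw [sq, Finset.sum_mul_sum]
    exact Finset.sum_congr rfl fun i _ => Finset.sum_congr rfl fun j _ => by ring
  have hfield : (∑ μ : Fin p, h μ * ∑ i : Fin (2 ^ (k + 1)), spin (ξ μ i) * spin (S i)) =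
      (∑ μ : Fin p, h μ * ∑ i : Fin (2 ^ k), spin (ξ μ (finLeft i)) * spin (S (finLeft i))) +
        ∑ μ : Fin p, h μ * ∑ i : Fin (2 ^ k), spin (ξ μ (finRight i)) * spin (S (finRight i)) := by
    rw [← Finset.sum_add_distrib]
    refine Finset.sum_congr rfl fun μ _ => ?_
    rw [← mul_add, sum_split (fun i => spin (ξ μ i) * spin (S i))]
  simp only [hA, hopH]
  rw [hT, hfield]
  ring

lemma interaction_nonneg (p : ℕ) (k : ℕ) (a : Fin p → Fin (2 ^ (k + 1)) → ℝ) :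
    0 ≤ ∑ μ : Fin p, (∑ i, a μ i) ^ 2 :=
  Finset.sum_nonneg fun μ _ => sq_nonneg _

lemma interaction_le (p k : ℕ) (S : Fin (2 ^ (k + 1)) → Bool)
    (ξ : Fin p → Fin (2 ^ (k + 1)) → Bool) :
    (∑ μ : Fin p, (∑ i : Fin (2 ^ (k + 1)), spin (ξ μ i) * spin (S i)) ^ 2) ≤
      (p : ℝ) * ((2 : ℝ) ^ (k + 1)) ^ 2 := by
  have hb : ∀ μ : Fin p, (∑ i : Fin (2 ^ (k + 1)), spin (ξ μ i) * spin (S i)) ^ 2 ≤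
      ((2 : ℝ) ^ (k + 1)) ^ 2 := by
    intro μ
    have habs : |∑ i : Fin (2 ^ (k + 1)), spin (ξ μ i) * spin (S i)| ≤ (2 : ℝ) ^ (k + 1) := by
      calc |∑ i : Fin (2 ^ (k + 1)), spin (ξ μ i) * spin (S i)|
          ≤ ∑ i : Fin (2 ^ (k + 1)), |spin (ξ μ i) * spin (S i)| :=
            Finset.abs_sum_le_sum_abs _ _
        _ = ∑ _i : Fin (2 ^ (k + 1)), (1 : ℝ) := by
            refine Finset.sum_congr rfl fun i _ => ?_
            rw [abs_mul, abs_spin, abs_spin, mul_one]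
        _ = (2 : ℝ) ^ (k + 1) := by
            rw [Finset.sum_const, Finset.card_univ, Fintype.card_fin, nsmul_eq_mul, mul_one]
            push_cast
            ring
    have := abs_le.1 habs
    nlinarith [this.1, this.2]
  calc (∑ μ : Fin p, (∑ i : Fin (2 ^ (k + 1)), spin (ξ μ i) * spin (S i)) ^ 2)
      ≤ ∑ _μ : Fin p, ((2 : ℝ) ^ (k + 1)) ^ 2 := Finset.sum_le_sum fun μ _ => hb μ
    _ = (p : ℝ) * ((2 : ℝ) ^ (k + 1)) ^ 2 := by
        rw [Finset.sum_const, Finset.card_univ, Fintype.card_fin, nsmul_eq_mul]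

lemma rpow_exp_id (σ : ℝ) (k : ℕ) :
    (2 : ℝ) ^ (((2 : ℝ) - 2 * σ) * ((k : ℝ) + 1)) * (2 : ℝ) ^ (2 * σ * ((k : ℝ) + 1)) =
      ((2 : ℝ) ^ (k + 1)) ^ 2 := by
  rw [← Real.rpow_add two_pos]
  have he : ((2 : ℝ) - 2 * σ) * ((k : ℝ) + 1) + 2 * σ * ((k : ℝ) + 1) = ((2 * (k + 1) : ℕ) : ℝ) := by
    push_cast; ring
  rw [he, Real.rpow_natCast, mul_comm 2 (k + 1), pow_mul]

lemma logZ_succ_le (β σ : ℝ) (p : ℕ) (h : Fin p → ℝ) (hβ : 0 ≤ β) (k : ℕ)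
    (ξ : Fin p → Fin (2 ^ (k + 1)) → Bool) :
    Real.log (hZ β σ p h (k + 1) ξ) ≤
      β * p / 2 * (2 : ℝ) ^ (((2 : ℝ) - 2 * σ) * ((k : ℝ) + 1)) +
        (Real.log (hZ β σ p h k (fun μ i => ξ μ (finLeft i))) +
          Real.log (hZ β σ p h k (fun μ i => ξ μ (finRight i)))) := by
  set C := β * p / 2 * (2 : ℝ) ^ (((2 : ℝ) - 2 * σ) * ((k : ℝ) + 1)) with hC
  set ξL := fun μ i => ξ μ (finLeft i) with hξL
  set ξR := fun μ i => ξ μ (finRight i) with hξR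
  have hP : (0 : ℝ) < (2 : ℝ) ^ (2 * σ * ((k : ℝ) + 1)) := Real.rpow_pos_of_pos two_pos _
  have key : hZ β σ p h (k + 1) ξ ≤ Real.exp C * (hZ β σ p h k ξL * hZ β σ p h k ξR) := by
    have hle : ∀ S : Fin (2 ^ (k + 1)) → Bool, Real.exp (hA β σ p h (k + 1) S ξ) ≤
        Real.exp C * (Real.exp (hA β σ p h k (fun i => S (finLeft i)) ξL) *
          Real.exp (hA β σ p h k (fun i => S (finRight i)) ξR)) := by
      intro S
      rw [← Real.exp_add, ← Real.exp_add]
      refine Real.exp_le_exp.2 ?_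
      rw [hA_succ]
      have hW : β * (1 / (2 * (2 : ℝ) ^ (2 * σ * ((k : ℝ) + 1))) *
          ∑ μ : Fin p, (∑ i : Fin (2 ^ (k + 1)), spin (ξ μ i) * spin (S i)) ^ 2) ≤ C := by
        have hT := interaction_le p k S ξ
        have hQ : (2 : ℝ) ^ (((2 : ℝ) - 2 * σ) * ((k : ℝ) + 1)) =
            ((2 : ℝ) ^ (k + 1)) ^ 2 / (2 : ℝ) ^ (2 * σ * ((k : ℝ) + 1)) := by
          rw [eq_div_iff hP.ne']
          exact rpow_exp_id σ k
        rw [hC, hQ]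
        have h1 : β * (1 / (2 * (2 : ℝ) ^ (2 * σ * ((k : ℝ) + 1))) *
            ∑ μ : Fin p, (∑ i : Fin (2 ^ (k + 1)), spin (ξ μ i) * spin (S i)) ^ 2) ≤
            β * (1 / (2 * (2 : ℝ) ^ (2 * σ * ((k : ℝ) + 1))) *
              ((p : ℝ) * ((2 : ℝ) ^ (k + 1)) ^ 2)) := by
          gcongr
        refine h1.trans (le_of_eq ?_)
        field_simp
      linarith
    calc hZ β σ p h (k + 1) ξ
        ≤ ∑ S : Fin (2 ^ (k + 1)) → Bool, Real.exp C *
            (Real.exp (hA β σ p h k (fun i => S (finLeft i)) ξL) *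
              Real.exp (hA β σ p h k (fun i => S (finRight i)) ξR)) :=
          Finset.sum_le_sum fun S _ => hle S
      _ = Real.exp C * ∑ S : Fin (2 ^ (k + 1)) → Bool,
            Real.exp (hA β σ p h k (fun i => S (finLeft i)) ξL) *
              Real.exp (hA β σ p h k (fun i => S (finRight i)) ξR) := by
          rw [Finset.mul_sum]
      _ = Real.exp C * (hZ β σ p h k ξL * hZ β σ p h k ξR) := by
          congr 1
          calc (∑ S : Fin (2 ^ (k + 1)) → Bool,
                Real.exp (hA β σ p h k (fun i => S (finLeft i)) ξL) *
                  Real.exp (hA β σ p h k (fun i => S (finRight i)) ξR))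
              = ∑ P : (Fin (2 ^ k) → Bool) × (Fin (2 ^ k) → Bool),
                  Real.exp (hA β σ p h k P.1 ξL) * Real.exp (hA β σ p h k P.2 ξR) :=
                Fintype.sum_equiv (splitE k Bool) _ _ (fun S => rfl)
            _ = ∑ S1 : Fin (2 ^ k) → Bool, ∑ S2 : Fin (2 ^ k) → Bool,
                  Real.exp (hA β σ p h k S1 ξL) * Real.exp (hA β σ p h k S2 ξR) :=
                by rw [Fintype.sum_prod_type]
            _ = hZ β σ p h k ξL * hZ β σ p h k ξR := (Finset.sum_mul_sum _ _ _ _).symm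
  calc Real.log (hZ β σ p h (k + 1) ξ)
      ≤ Real.log (Real.exp C * (hZ β σ p h k ξL * hZ β σ p h k ξR)) :=
        Real.log_le_log (hZ_pos _ _ _ _ _ _) key
    _ = C + (Real.log (hZ β σ p h k ξL) + Real.log (hZ β σ p h k ξR)) := by
        rw [Real.log_mul (Real.exp_ne_zero _) (mul_pos (hZ_pos β σ p h k ξL) (hZ_pos β σ p h k ξR)).ne', Real.log_exp,
          Real.log_mul (hZ_pos β σ p h k ξL).ne' (hZ_pos β σ p h k ξR).ne']

/-- Split a pattern assignment on `2^(k+1)` sites into its two halves. -/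
def splitEp (k p : ℕ) : (Fin p → Fin (2 ^ (k + 1)) → Bool) ≃
    (Fin p → Fin (2 ^ k) → Bool) × (Fin p → Fin (2 ^ k) → Bool) where
  toFun ξ := (fun μ i => ξ μ (finLeft i), fun μ i => ξ μ (finRight i))
  invFun P μ := (splitE k Bool).symm (P.1 μ, P.2 μ)
  left_inv ξ := funext fun μ => (splitE k Bool).symm_apply_apply (ξ μ)
  right_inv P := by
    refine Prod.ext ?_ ?_ <;> funext μ i
    · exact splitE_symm_left (P.1 μ, P.2 μ) i
    · exact splitE_symm_right (P.1 μ, P.2 μ) i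

lemma card_patterns (k p : ℕ) :
    (Fintype.card (Fin p → Fin (2 ^ k) → Bool) : ℝ) = (2 : ℝ) ^ (p * 2 ^ k) := by
  rw [Fintype.card_fun, Fintype.card_fun, Fintype.card_bool, Fintype.card_fin, Fintype.card_fin,
    ← pow_mul]
  push_cast
  rw [mul_comm]

lemma hopF_succ_le (β σ : ℝ) (p : ℕ) (h : Fin p → ℝ) (hβ : 0 ≤ β) (k : ℕ) :
    hopF β σ p h (k + 1) ≤ hopF β σ p h k +
      β * p / 2 * ((2 : ℝ) ^ ((1 : ℝ) - 2 * σ)) ^ (k + 1) := by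
  set C := β * p / 2 * (2 : ℝ) ^ (((2 : ℝ) - 2 * σ) * ((k : ℝ) + 1)) with hC
  set M := (2 : ℝ) ^ (p * 2 ^ k) with hM
  set Sig0 := ∑ ξ : Fin p → Fin (2 ^ k) → Bool, Real.log (hZ β σ p h k ξ) with hSig0
  have hMpos : (0 : ℝ) < M := by positivity
  have hsum : (∑ ξ : Fin p → Fin (2 ^ (k + 1)) → Bool, Real.log (hZ β σ p h (k + 1) ξ)) ≤
      M ^ 2 * C + 2 * M * Sig0 := by
    calc (∑ ξ : Fin p → Fin (2 ^ (k + 1)) → Bool, Real.log (hZ β σ p h (k + 1) ξ))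
        ≤ ∑ ξ : Fin p → Fin (2 ^ (k + 1)) → Bool, (C +
            (Real.log (hZ β σ p h k (fun μ i => ξ μ (finLeft i))) +
              Real.log (hZ β σ p h k (fun μ i => ξ μ (finRight i))))) :=
          Finset.sum_le_sum fun ξ _ => logZ_succ_le β σ p h hβ k ξ
      _ = ∑ P : (Fin p → Fin (2 ^ k) → Bool) × (Fin p → Fin (2 ^ k) → Bool),
            (C + (Real.log (hZ β σ p h k P.1) + Real.log (hZ β σ p h k P.2))) :=
          Fintype.sum_equiv (splitEp k p) _ _ (fun ξ => rfl)
      _ = M ^ 2 * C + 2 * M * Sig0 := by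
          rw [Finset.sum_add_distrib, Finset.sum_add_distrib, Finset.sum_const,
            Finset.card_univ, Fintype.card_prod]
          rw [Fintype.sum_prod_type, Fintype.sum_prod_type]
          simp only [Finset.sum_const, Finset.card_univ, nsmul_eq_mul]
          rw [← Finset.mul_sum, ← hSig0]
          push_cast [card_patterns k p]
          ring
  have hMM : ((2 : ℝ) ^ (p * 2 ^ (k + 1))) = M ^ 2 := by
    rw [hM, ← pow_mul]
    congr 1
    rw [two_pow_succ' k]
    ring
  rw [hopF_eq, hopF_eq, hMM]
  have hN : (0 : ℝ) < (2 : ℝ) ^ (k + 1) := by positivity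
  have step1 : ((2 : ℝ) ^ (k + 1))⁻¹ * (((M : ℝ) ^ 2)⁻¹ *
      ∑ ξ : Fin p → Fin (2 ^ (k + 1)) → Bool, Real.log (hZ β σ p h (k + 1) ξ)) ≤
      ((2 : ℝ) ^ (k + 1))⁻¹ * ((M ^ 2)⁻¹ * (M ^ 2 * C + 2 * M * Sig0)) := by
    gcongr
  refine step1.trans (le_of_eq ?_)
  have hCr : C / (2 : ℝ) ^ (k + 1) =
      β * p / 2 * ((2 : ℝ) ^ ((1 : ℝ) - 2 * σ)) ^ (k + 1) := by
    rw [hC]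
    have h1 : ((2 : ℝ) ^ ((1 : ℝ) - 2 * σ)) ^ (k + 1) =
        (2 : ℝ) ^ (((1 : ℝ) - 2 * σ) * ((k : ℝ) + 1)) := by
      rw [← Real.rpow_natCast ((2 : ℝ) ^ ((1 : ℝ) - 2 * σ)) (k + 1), ← Real.rpow_mul (by norm_num)]
      push_cast
      ring_nf
    have h2 : ((2 : ℝ) ^ (k + 1) : ℝ) = (2 : ℝ) ^ (((k : ℕ) + 1 : ℕ) : ℝ) := by
      rw [Real.rpow_natCast]
    rw [h1, h2, mul_div_assoc, ← Real.rpow_sub two_pos]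
    have h3 : ((2 : ℝ) - 2 * σ) * ((k : ℝ) + 1) - (((k : ℕ) + 1 : ℕ) : ℝ) =
        ((1 : ℝ) - 2 * σ) * ((k : ℝ) + 1) := by push_cast; ring
    rw [h3]
  have hsplit : ((2 : ℝ) ^ (k + 1))⁻¹ * ((M ^ 2)⁻¹ * (M ^ 2 * C + 2 * M * Sig0)) =
      ((2 : ℝ) ^ k)⁻¹ * (M⁻¹ * Sig0) + C / (2 : ℝ) ^ (k + 1) := by
    rw [pow_succ]
    field_simp
    ring
  rw [hsplit, hCr, hSig0]

lemma sum_fin_one {M : Type*} [AddCommMonoid M] (f : Fin (2 ^ 0) → M) :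
    ∑ i, f i = f ⟨0, Nat.one_pos⟩ := by
  have hu : (Finset.univ : Finset (Fin (2 ^ 0))) = {⟨0, Nat.one_pos⟩} := by
    ext i
    simp only [Finset.mem_univ, Finset.mem_singleton, true_iff]
    exact Fin.ext (Nat.lt_one_iff.mp i.isLt)
  rw [hu, Finset.sum_singleton]

/-- Configurations on a single site are just booleans. -/
def boolE : (Fin (2 ^ 0) → Bool) ≃ Bool where
  toFun S := S ⟨0, Nat.one_pos⟩
  invFun b _ := b
  left_inv S := funext fun i => congrArg S (Fin.ext (Nat.lt_one_iff.mp i.isLt).symm)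
  right_inv b := rfl

lemma hopF_zero (β σ : ℝ) (p : ℕ) (h : Fin p → ℝ) :
    hopF β σ p h 0 = Real.log 2 + ((2 : ℝ) ^ p)⁻¹ *
      ∑ ξ : Fin p → Bool, Real.log (Real.cosh (β * ∑ μ, h μ * spin (ξ μ))) := by
  have hZz : ∀ ξ : Fin p → Fin (2 ^ 0) → Bool,
      hZ β σ p h 0 ξ = 2 * Real.cosh (β * ∑ μ, h μ * spin (ξ μ ⟨0, Nat.one_pos⟩)) := by
    intro ξ
    have hAz : ∀ S : Fin (2 ^ 0) → Bool, hA β σ p h 0 S ξ =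
        (β * ∑ μ, h μ * spin (ξ μ ⟨0, Nat.one_pos⟩)) * spin (S ⟨0, Nat.one_pos⟩) := by
      intro S
      have h1 : (∑ μ, h μ * ∑ i : Fin (2 ^ 0), spin (ξ μ i) * spin (S i)) =
          ∑ μ, h μ * spin (ξ μ ⟨0, Nat.one_pos⟩) * spin (S ⟨0, Nat.one_pos⟩) :=
        Finset.sum_congr rfl fun μ _ => by rw [sum_fin_one, mul_assoc]
      simp only [hA, hopH, h1, mul_zero, neg_mul, neg_zero, zero_add]
      rw [mul_assoc, Finset.sum_mul]
    calc hZ β σ p h 0 ξ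
        = ∑ S : Fin (2 ^ 0) → Bool,
            Real.exp ((β * ∑ μ, h μ * spin (ξ μ ⟨0, Nat.one_pos⟩)) * spin (S ⟨0, Nat.one_pos⟩)) :=
          Finset.sum_congr rfl fun S _ => by rw [hAz S]
      _ = ∑ b : Bool, Real.exp ((β * ∑ μ, h μ * spin (ξ μ ⟨0, Nat.one_pos⟩)) * spin b) :=
          Fintype.sum_equiv boolE _ _ fun S => rfl
      _ = 2 * Real.cosh (β * ∑ μ, h μ * spin (ξ μ ⟨0, Nat.one_pos⟩)) := by
          rw [Fintype.sum_bool, show spin true = 1 from by norm_num [spin],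
            show spin false = (-1 : ℝ) from by norm_num [spin], mul_one, mul_neg_one,
            Real.cosh_eq]
          ring
  rw [hopF_eq]
  have hxi : (∑ ξ : Fin p → Fin (2 ^ 0) → Bool, Real.log (hZ β σ p h 0 ξ)) =
      ∑ η : Fin p → Bool, Real.log (2 * Real.cosh (β * ∑ μ, h μ * spin (η μ))) := by
    refine Fintype.sum_equiv (Equiv.piCongrRight fun _ => boolE) _ _ fun ξ => ?_
    rw [hZz ξ]
    rfl
  rw [hxi]
  have hlog : (∑ η : Fin p → Bool, Real.log (2 * Real.cosh (β * ∑ μ, h μ * spin (η μ)))) =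
      (2 : ℝ) ^ p * Real.log 2 +
        ∑ η : Fin p → Bool, Real.log (Real.cosh (β * ∑ μ, h μ * spin (η μ))) := by
    rw [show (∑ η : Fin p → Bool, Real.log (2 * Real.cosh (β * ∑ μ, h μ * spin (η μ)))) =
        ∑ η : Fin p → Bool, (Real.log 2 + Real.log (Real.cosh (β * ∑ μ, h μ * spin (η μ)))) from
      Finset.sum_congr rfl fun η _ => Real.log_mul two_ne_zero (Real.cosh_pos _).ne']
    rw [Finset.sum_add_distrib, Finset.sum_const, Finset.card_univ, Fintype.card_fun,
      Fintype.card_bool, Fintype.card_fin, nsmul_eq_mul]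
    push_cast
    ring
  rw [hlog]
  have hp2 : p * 2 ^ 0 = p := by norm_num
  rw [hp2, pow_zero, inv_one, one_mul, mul_add]
  rw [inv_mul_cancel_left₀ (by positivity : ((2 : ℝ) ^ p) ≠ 0)]

/-- uniform bound for the quenched free energy of the HHM, where
`f_0 = log 2 + E_ξ[log cosh(β Σ_μ h_μ ξ^μ)]`. -/
theorem hopfield_free_energy_bounded (k p : ℕ) (hp : 1 ≤ p) (β σ : ℝ) (h : Fin p → ℝ)
    (hβ : 0 < β) (hσ : σ ∈ Set.Ioo (1 / 2 : ℝ) 1) :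
    hopF β σ p h k ≤
      (Real.log 2 + ((2 : ℝ) ^ p)⁻¹ *
          ∑ ξ : Fin p → Bool, Real.log (Real.cosh (β * ∑ μ, h μ * spin (ξ μ)))) +
        β * p / 2 * ((2 : ℝ) ^ (1 - 2 * σ) / (1 - (2 : ℝ) ^ (1 - 2 * σ))) := by
  obtain ⟨hσ1, hσ2⟩ := hσ
  set r := (2 : ℝ) ^ ((1 : ℝ) - 2 * σ) with hr
  have hr0 : 0 < r := Real.rpow_pos_of_pos two_pos _
  have hr1 : r < 1 :=
    Real.rpow_lt_one_of_one_lt_of_neg one_lt_two (by linarith)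
  have hden : (0 : ℝ) < 1 - r := by linarith
  have hind : ∀ m : ℕ, hopF β σ p h m ≤ hopF β σ p h 0 +
      β * p / 2 * ∑ j ∈ Finset.range m, r ^ (j + 1) := by
    intro m
    induction m with
    | zero => simp
    | succ n ih =>
        have hstep := hopF_succ_le β σ p h hβ.le n
        rw [Finset.sum_range_succ, mul_add]
        linarith
  have hgeom : (∑ j ∈ Finset.range k, r ^ (j + 1)) ≤ r / (1 - r) := by
    have h1 : (∑ j ∈ Finset.range k, r ^ (j + 1)) = r * ∑ j ∈ Finset.range k, r ^ j := by
      rw [Finset.mul_sum]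
      exact Finset.sum_congr rfl fun j _ => by ring
    have h2 : r * ∑ j ∈ Finset.range k, r ^ j = (r - r ^ (k + 1)) / (1 - r) := by
      rw [geom_sum_eq hr1.ne k, eq_div_iff hden.ne']
      have hr1' : r - 1 ≠ 0 := fun h0 => hr1.ne (by linarith)
      field_simp
      ring
    rw [h1, h2, div_le_div_iff_of_pos_right hden]
    have := pow_nonneg hr0.le (k + 1)
    linarith
  have hcoef : (0 : ℝ) ≤ β * p / 2 := by positivity
  have := hind k
  have h3 : β * p / 2 * (∑ j ∈ Finset.range k, r ^ (j + 1)) ≤ β * p / 2 * (r / (1 - r)) :=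
    mul_le_mul_of_nonneg_left hgeom hcoef
  rw [hopF_zero β σ p h] at this
  calc hopF β σ p h k ≤ _ := this
    _ ≤ _ := by
        rw [hr]
        exact add_le_add le_rfl h3
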